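/- For every positive integer ℓ and every μ ∈ Z^4, the number of elements p ∈ S_ℓ with wtc(p) = μ equals Σ_{r ∈ T_ℓ, wtcT(r) = μ} (1 + r_2 − r_4 − 2r_5). (This is the combinatorial identity underlying condition (C1): the list of weights (wt(p))_{p ∈ S_ℓ} coincides, with multiplicity, with the list of weights wt_T(r) each counted 1 + r_2 − r_4 − 2r_5 times over r ∈ T_ℓ.) -/

import Mathlib

/-- The set `S_ℓ ⊆ Z_{≥0}^6` (coordinates `p 0, …, p 5` are `p_1, …, p_6`). -/
def Sset (ℓ : ℤ) : Set (Fin 6 → ℤ) :=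
  {p | (∀ i, 0 ≤ p i) ∧ p 5 ≤ p 4 ∧ p 4 ≤ p 3 ∧ p 3 ≤ p 2 ∧ p 2 ≤ p 1 ∧
       p 1 + p 2 + p 3 - p 4 ≤ p 0 ∧ p 0 ≤ p 3 + ℓ}

/-- The set `T_ℓ ⊆ Z_{≥0}^5` (coordinates `r 0, …, r 4` are `r_1, …, r_5`). -/
def Tset (ℓ : ℤ) : Set (Fin 5 → ℤ) :=
  {r | (∀ i, 0 ≤ r i) ∧ r 0 + r 1 + r 2 + r 3 ≤ ℓ ∧ r 3 + 2 * r 4 ≤ r 1}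

/-- The map `φ(p_1,…,p_6) = (p_6, p_1−p_2−p_6, p_2−p_3, p_3−p_4, p_4−p_5)`. -/
def phi (p : Fin 6 → ℤ) : Fin 5 → ℤ :=
  ![p 5, p 0 - p 1 - p 5, p 1 - p 2, p 2 - p 3, p 3 - p 4]

/-- Coordinates of `wt(p)` in the basis `(ϖ_1, ϖ_2, γ_1, γ_2)`. -/
def wtc (p : Fin 6 → ℤ) : Fin 4 → ℤ :=
  ![p 0 - p 1 - p 2 - p 3 + 2 * p 4 - p 5, -p 0 + 2 * p 3 - p 4, p 1 - p 2, p 2 - p 3]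

/-- Coordinates of `wt_T(r)` in the basis `(ϖ_1, ϖ_2, γ_1, γ_2)`. -/
def wtcT (r : Fin 5 → ℤ) : Fin 4 → ℤ :=
  ![r 1 - r 3 - 2 * r 4, -r 0 - r 1 - r 2 - r 3 + r 4, r 2, r 3]

lemma cons_val_five {α : Type*} (a b c d e f : α) :
    (![a, b, c, d, e, f] : Fin 6 → α) 5 = f := rfl

/-- Section of `phi` with free parameter `t = p 4`. -/
def psi (r : Fin 5 → ℤ) (t : ℤ) : Fin 6 → ℤ :=
  ![t + r 0 + r 1 + r 2 + r 3 + r 4, t + r 2 + r 3 + r 4, t + r 3 + r 4, t + r 4, t, r 0]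

lemma phi_psi (r : Fin 5 → ℤ) (t : ℤ) : phi (psi r t) = r := by
  funext i
  fin_cases i <;> simp [phi, psi, Matrix.cons_val_succ, cons_val_five] <;> ring

lemma psi_injective (r : Fin 5 → ℤ) : Function.Injective (psi r) := by
  intro a b h
  have := congrFun h 4
  simpa [psi, Matrix.cons_val_succ, cons_val_five] using this

lemma wtc_psi (r : Fin 5 → ℤ) (t : ℤ) : wtc (psi r t) = wtcT r := by
  funext i
  fin_cases i <;> simp [wtc, wtcT, psi, Matrix.cons_val_succ, cons_val_five] <;> ring

/-- The fiber of `phi` over `r`, intersected with `Sset ℓ`, as a finset. -/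
noncomputable def fiber (r : Fin 5 → ℤ) : Finset (Fin 6 → ℤ) :=
  (Finset.Icc (r 0) (r 0 + (r 1 - r 3 - 2 * r 4))).image (psi r)

lemma mem_fiber {r : Fin 5 → ℤ} {p : Fin 6 → ℤ} :
    p ∈ fiber r ↔ ∃ t, (r 0 ≤ t ∧ t ≤ r 0 + (r 1 - r 3 - 2 * r 4)) ∧ psi r t = p := by
  simp [fiber, Finset.mem_image, Finset.mem_Icc, and_assoc]

lemma card_fiber (r : Fin 5 → ℤ) (h : r 3 + 2 * r 4 ≤ r 1) :
    ((fiber r).card : ℤ) = 1 + r 1 - r 3 - 2 * r 4 := by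
  rw [fiber, Finset.card_image_of_injective _ (psi_injective r), Int.card_Icc,
    Int.toNat_of_nonneg (by omega)]
  ring

theorem stmt12 (ℓ : ℤ) (hℓ : 0 < ℓ) (μ : Fin 4 → ℤ) :
    (Set.ncard {p : Fin 6 → ℤ | p ∈ Sset ℓ ∧ wtc p = μ} : ℤ) =
      ∑ᶠ (r : Fin 5 → ℤ) (_ : r ∈ Tset ℓ ∧ wtcT r = μ),
        (1 + r 1 - r 3 - 2 * r 4) := by
  classical
  -- finiteness of the index set of the RHS
  have hTfin : {r : Fin 5 → ℤ | r ∈ Tset ℓ ∧ wtcT r = μ}.Finite := by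
    apply Set.Finite.subset (Set.Finite.pi (fun _ : Fin 5 => Set.finite_Icc (0 : ℤ) ℓ))
    rintro r ⟨⟨hpos, h1, h2⟩, -⟩
    have h0 := hpos 0; have h1' := hpos 1; have h2' := hpos 2
    have h3 := hpos 3; have h4 := hpos 4
    intro i _
    fin_cases i <;>
      simp only [Fin.zero_eta, Fin.mk_one, Fin.reduceFinMk, Set.mem_Icc] <;> omega
  -- finiteness of the LHS set
  have hSfin : {p : Fin 6 → ℤ | p ∈ Sset ℓ ∧ wtc p = μ}.Finite := by
    apply Set.Finite.subset (Set.Finite.pi (fun _ : Fin 6 => Set.finite_Icc (0 : ℤ) (2 * ℓ)))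
    rintro p ⟨⟨hpos, h1, h2, h3, h4, h5, h6⟩, -⟩
    have g0 := hpos 0; have g1 := hpos 1; have g2 := hpos 2
    have g3 := hpos 3; have g4 := hpos 4; have g5 := hpos 5
    intro i _
    fin_cases i <;>
      simp only [Fin.zero_eta, Fin.mk_one, Fin.reduceFinMk, Set.mem_Icc] <;> omega
  -- the key decomposition of the LHS set as a disjoint union of fibers
  have hkey : hSfin.toFinset = hTfin.toFinset.biUnion fiber := by
    ext p
    rw [Set.Finite.mem_toFinset, Finset.mem_biUnion]
    constructor
    · rintro ⟨⟨hpos, h1, h2, h3, h4, h5, h6⟩, hw⟩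
      have g0 := hpos 0; have g1 := hpos 1; have g2 := hpos 2
      have g3 := hpos 3; have g4 := hpos 4; have g5 := hpos 5
      refine ⟨phi p, ?_, ?_⟩
      · rw [Set.Finite.mem_toFinset]
        refine ⟨⟨fun i => ?_, ?_, ?_⟩, ?_⟩
        · fin_cases i <;> simp [phi, Matrix.cons_val_succ, cons_val_five] <;> omega
        · simp [phi, Matrix.cons_val_succ, cons_val_five]; omega
        · simp [phi, Matrix.cons_val_succ, cons_val_five]; omega
        · rw [← hw]
          funext i
          fin_cases i <;> simp [wtc, wtcT, phi, Matrix.cons_val_succ, cons_val_five] <;> ring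
      · rw [mem_fiber]
        refine ⟨p 4, ⟨?_, ?_⟩, ?_⟩
        · simp [phi, Matrix.cons_val_succ, cons_val_five]; omega
        · simp [phi, Matrix.cons_val_succ, cons_val_five]; omega
        · funext i
          fin_cases i <;> simp [psi, phi, Matrix.cons_val_succ, cons_val_five] <;> ring
    · rintro ⟨r, hr, hp⟩
      rw [Set.Finite.mem_toFinset] at hr
      obtain ⟨⟨hpos, h1, h2⟩, hw⟩ := hr
      rw [mem_fiber] at hp
      obtain ⟨t, ⟨ht1, ht2⟩, rfl⟩ := hp
      have h0 := hpos 0; have h1' := hpos 1; have h2' := hpos 2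
      have h3 := hpos 3; have h4 := hpos 4
      refine ⟨⟨fun i => ?_, ?_, ?_, ?_, ?_, ?_, ?_⟩, ?_⟩
      · fin_cases i <;> simp [psi, Matrix.cons_val_succ, cons_val_five] <;> omega
      · simp [psi, Matrix.cons_val_succ, cons_val_five]; omega
      · simp [psi, Matrix.cons_val_succ, cons_val_five]; omega
      · simp [psi, Matrix.cons_val_succ, cons_val_five]; omega
      · simp [psi, Matrix.cons_val_succ, cons_val_five]; omega
      · simp [psi, Matrix.cons_val_succ, cons_val_five]; omega
      · simp [psi, Matrix.cons_val_succ, cons_val_five]; omega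
      · rw [wtc_psi]; exact hw
  -- disjointness of the fibers
  have hdisj : ∀ x ∈ hTfin.toFinset, ∀ y ∈ hTfin.toFinset, x ≠ y →
      Disjoint (fiber x) (fiber y) := by
    intro x _ y _ hxy
    rw [Finset.disjoint_left]
    rintro p hx hy
    rw [mem_fiber] at hx hy
    obtain ⟨t, -, rfl⟩ := hx
    obtain ⟨s, -, he⟩ := hy
    exact hxy (by rw [← phi_psi x t, ← he, phi_psi])
  -- rewrite the RHS finsum as a finset sum
  have hrhs : (∑ᶠ (r : Fin 5 → ℤ) (_ : r ∈ Tset ℓ ∧ wtcT r = μ), (1 + r 1 - r 3 - 2 * r 4))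
      = ∑ r ∈ hTfin.toFinset, (1 + r 1 - r 3 - 2 * r 4) := by
    rw [← finsum_mem_coe_finset, Set.Finite.coe_toFinset]
    rfl
  rw [hrhs, Set.ncard_eq_toFinset_card _ hSfin, hkey, Finset.card_biUnion hdisj]
  push_cast
  refine Finset.sum_congr rfl fun r hr => ?_
  rw [Set.Finite.mem_toFinset] at hr
  exact card_fiber r hr.1.2.2
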